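/- Protocol ordering of cascade centralities on the path networks: for N ≥ 4 agents and every seed agent j with 1 ≤ j ≤ N, the multiplex cascade centralities satisfy the strict inequalities C_j^{𝒢_R, OR} > C_j^{G_Pa} > C_j^{𝒢_R, AND}, where C_j^{𝒢_R, OR} (respectively C_j^{𝒢_R, AND}) is the cascade centrality of j on the duplex repeated path network 𝒢_R with all agents using Protocol OR (respectively Protocol AND), and C_j^{G_Pa} is the cascade centrality of j on the monoplex path network G_Pa. -/

import Mathlib

open MeasureTheory

inductive Protocol
  | OR
  | AND
deriving DecidableEq

noncomputable def ltmStep {n m : ℕ} (w : Fin m → Fin n → Fin n → ℝ)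
    (u : Fin n → Protocol) (μ : Fin n → Fin m → ℝ)
    (A : Finset (Fin n)) : Finset (Fin n) :=
  A ∪ Finset.univ.filter fun i =>
    (u i = Protocol.OR ∧ ∃ k, μ i k < ∑ j ∈ A, w k i j) ∨
    (u i = Protocol.AND ∧ ∀ k, μ i k < ∑ j ∈ A, w k i j)

noncomputable def ltmSS {n m : ℕ} (w : Fin m → Fin n → Fin n → ℝ)
    (u : Fin n → Protocol) (S₀ : Finset (Fin n))
    (μ : Fin n → Fin m → ℝ) : Finset (Fin n) :=
  (ltmStep w u μ)^[n] S₀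

noncomputable def thMeasure (n m : ℕ) : Measure (Fin n → Fin m → ℝ) :=
  Measure.pi fun _ => Measure.pi fun _ => volume.restrict (Set.Icc (0:ℝ) 1)

noncomputable def pLTM {n m : ℕ} (w : Fin m → Fin n → Fin n → ℝ)
    (u : Fin n → Protocol) (S₀ : Finset (Fin n)) (i : Fin n) : ℝ :=
  (thMeasure n m {μ | i ∈ ltmSS w u S₀ μ}).toReal

def lemStep {n m : ℕ} (S₀ : Finset (Fin n)) (u : Fin n → Protocol)
    (σ : Fin n → Fin m → Fin n) (A : Finset (Fin n)) : Finset (Fin n) :=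
  S₀ ∪ A ∪ Finset.univ.filter fun i =>
    (u i = Protocol.OR ∧ ∃ k, σ i k ∈ A) ∨
    (u i = Protocol.AND ∧ ∀ k, σ i k ∈ A)

def UReachable {n m : ℕ} (S₀ : Finset (Fin n)) (u : Fin n → Protocol)
    (σ : Fin n → Fin m → Fin n) (i : Fin n) : Prop :=
  i ∈ (lemStep S₀ u σ)^[n] S₀

instance {n m : ℕ} (S₀ : Finset (Fin n)) (u : Fin n → Protocol)
    (σ : Fin n → Fin m → Fin n) (i : Fin n) : Decidable (UReachable S₀ u σ i) := by
  unfold UReachable; infer_instance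

noncomputable def rProb {n m : ℕ} (w : Fin m → Fin n → Fin n → ℝ)
    (S₀ : Finset (Fin n)) (u : Fin n → Protocol) (i : Fin n) : ℝ :=
  ∑ σ : Fin n → Fin m → Fin n,
    if UReachable S₀ u σ i then ∏ a : Fin n, ∏ k : Fin m, w k a (σ a k) else 0

noncomputable def casCen {n m : ℕ} (w : Fin m → Fin n → Fin n → ℝ)
    (u : Fin n → Protocol) (j : Fin n) : ℝ :=
  ∑ i : Fin n, pLTM w u {j} i

noncomputable def pathW (N : ℕ) (i j : Fin N) : ℝ :=
  if j.val = i.val + 1 ∨ i.val = j.val + 1 then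
    (if i.val = 0 ∨ i.val = N - 1 then 1 else 1/2)
  else 0

noncomputable def cycleW (N : ℕ) (i j : Fin N) : ℝ :=
  if (i.val + 1) % N = j.val ∨ (j.val + 1) % N = i.val then 1/2 else 0

noncomputable def permW2 (N : ℕ) (i j : Fin N) : ℝ :=
  if ((i.val + 1) % N = j.val ∨ (j.val + 1) % N = i.val) ∧
      ¬((i.val = N - 2 ∧ j.val = N - 1) ∨ (i.val = N - 1 ∧ j.val = N - 2)) then
    (if i.val = N - 2 ∨ i.val = N - 1 then 1 else 1/2)
  else 0

section AuxBasic

open Finset MeasureTheory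

lemma mem_ltmStep_iff {n m : ℕ} {w : Fin m → Fin n → Fin n → ℝ} {u : Fin n → Protocol}
    {μ : Fin n → Fin m → ℝ} {A : Finset (Fin n)} {i : Fin n} :
    i ∈ ltmStep w u μ A ↔ i ∈ A ∨
      ((u i = Protocol.OR ∧ ∃ k, μ i k < ∑ j ∈ A, w k i j) ∨
       (u i = Protocol.AND ∧ ∀ k, μ i k < ∑ j ∈ A, w k i j)) := by
  simp [ltmStep]

lemma mem_ltmStep_one_iff {n : ℕ} {w : Fin 1 → Fin n → Fin n → ℝ} {u : Fin n → Protocol}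
    {μ : Fin n → Fin 1 → ℝ} {A : Finset (Fin n)} {i : Fin n} :
    i ∈ ltmStep w u μ A ↔ i ∈ A ∨ μ i 0 < ∑ j ∈ A, w 0 i j := by
  rw [mem_ltmStep_iff]
  cases hu : u i <;> simp [hu, Fin.exists_fin_one, Fin.forall_fin_one]

lemma subset_ltmStep {n m : ℕ} (w : Fin m → Fin n → Fin n → ℝ) (u : Fin n → Protocol)
    (μ : Fin n → Fin m → ℝ) (A : Finset (Fin n)) : A ⊆ ltmStep w u μ A :=
  Finset.subset_union_left

lemma iter_subset_iter {n m : ℕ} (w : Fin m → Fin n → Fin n → ℝ) (u : Fin n → Protocol)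
    (μ : Fin n → Fin m → ℝ) (S₀ : Finset (Fin n)) {s t : ℕ} (h : s ≤ t) :
    (ltmStep w u μ)^[s] S₀ ⊆ (ltmStep w u μ)^[t] S₀ := by
  induction h with
  | refl => exact Finset.Subset.refl _
  | step _ ih =>
      refine ih.trans ?_
      rw [Function.iterate_succ_apply']
      exact subset_ltmStep _ _ _ _

lemma ltmSS_anti {n : ℕ} {w : Fin 1 → Fin n → Fin n → ℝ} (hw : ∀ i j, 0 ≤ w 0 i j)
    (u : Fin n → Protocol) (S₀ : Finset (Fin n)) {ν ν' : Fin n → Fin 1 → ℝ}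
    (h : ∀ a, ν a 0 ≤ ν' a 0) : ltmSS w u S₀ ν' ⊆ ltmSS w u S₀ ν := by
  have key : ∀ t, (ltmStep w u ν')^[t] S₀ ⊆ (ltmStep w u ν)^[t] S₀ := by
    intro t
    induction t with
    | zero => exact Finset.Subset.refl _
    | succ t ih =>
        rw [Function.iterate_succ_apply', Function.iterate_succ_apply']
        intro x hx
        rw [mem_ltmStep_one_iff] at hx ⊢
        rcases hx with hx | hx
        · exact Or.inl (ih hx)
        · refine Or.inr ?_
          calc ν x 0 ≤ ν' x 0 := h x
            _ < ∑ j ∈ (ltmStep w u ν')^[t] S₀, w 0 x j := hx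
            _ ≤ ∑ j ∈ (ltmStep w u ν)^[t] S₀, w 0 x j :=
                Finset.sum_le_sum_of_subset_of_nonneg ih (fun j _ _ => hw x j)
  exact key n

lemma ltmSS_two_OR {n : ℕ} (W : Fin n → Fin n → ℝ) (u : Fin n → Protocol)
    (S₀ : Finset (Fin n)) (μ : Fin n → Fin 2 → ℝ) :
    ltmSS (fun _ : Fin 2 => W) (fun _ => Protocol.OR) S₀ μ
      = ltmSS (fun _ : Fin 1 => W) u S₀ (fun a _ => min (μ a 0) (μ a 1)) := by
  unfold ltmSS
  have hstep : ltmStep (fun _ : Fin 2 => W) (fun _ => Protocol.OR) μ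
      = ltmStep (fun _ : Fin 1 => W) u (fun a _ => min (μ a 0) (μ a 1)) := by
    funext A
    ext i
    rw [mem_ltmStep_iff, mem_ltmStep_one_iff]
    simp [Fin.exists_fin_two, min_lt_iff]
  rw [hstep]

lemma ltmSS_two_AND {n : ℕ} (W : Fin n → Fin n → ℝ) (u : Fin n → Protocol)
    (S₀ : Finset (Fin n)) (μ : Fin n → Fin 2 → ℝ) :
    ltmSS (fun _ : Fin 2 => W) (fun _ => Protocol.AND) S₀ μ
      = ltmSS (fun _ : Fin 1 => W) u S₀ (fun a _ => max (μ a 0) (μ a 1)) := by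
  unfold ltmSS
  have hstep : ltmStep (fun _ : Fin 2 => W) (fun _ => Protocol.AND) μ
      = ltmStep (fun _ : Fin 1 => W) u (fun a _ => max (μ a 0) (μ a 1)) := by
    funext A
    ext i
    rw [mem_ltmStep_iff, mem_ltmStep_one_iff]
    simp [Fin.forall_fin_two, max_lt_iff]
  rw [hstep]

end AuxBasic
section AuxMeasure

open MeasureTheory

lemma measurableSet_stepEq {n m : ℕ} (w : Fin m → Fin n → Fin n → ℝ) (u : Fin n → Protocol)
    (A B : Finset (Fin n)) :
    MeasurableSet {μ : Fin n → Fin m → ℝ | ltmStep w u μ A = B} := by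
  have hset : {μ : Fin n → Fin m → ℝ | ltmStep w u μ A = B}
      = ⋂ i : Fin n, {μ | i ∈ ltmStep w u μ A ↔ i ∈ B} := by
    ext μ
    simp [Finset.ext_iff]
  rw [hset]
  refine MeasurableSet.iInter fun i => ?_
  have hev : ∀ k : Fin m, Measurable fun μ : Fin n → Fin m → ℝ => μ i k :=
    fun k => (measurable_pi_apply k).comp (measurable_pi_apply i)
  have hm : MeasurableSet {μ : Fin n → Fin m → ℝ | i ∈ ltmStep w u μ A} := by
    have h2 : {μ : Fin n → Fin m → ℝ | i ∈ ltmStep w u μ A} =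
        {μ | i ∈ A} ∪ (({μ | u i = Protocol.OR} ∩
            ⋃ k, {μ : Fin n → Fin m → ℝ | μ i k < ∑ j ∈ A, w k i j}) ∪
          ({μ | u i = Protocol.AND} ∩
            ⋂ k, {μ : Fin n → Fin m → ℝ | μ i k < ∑ j ∈ A, w k i j})) := by
      ext μ
      simp [mem_ltmStep_iff]
    rw [h2]
    exact (MeasurableSet.const _).union
      (((MeasurableSet.const _).inter
          (MeasurableSet.iUnion fun k => measurableSet_lt (hev k) measurable_const)).union
        ((MeasurableSet.const _).inter
          (MeasurableSet.iInter fun k => measurableSet_lt (hev k) measurable_const)))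
  by_cases hB : i ∈ B
  · simpa [hB] using hm
  · have : {μ : Fin n → Fin m → ℝ | i ∈ ltmStep w u μ A ↔ i ∈ B}
        = {μ : Fin n → Fin m → ℝ | i ∈ ltmStep w u μ A}ᶜ := by
      ext μ; simp [hB]
    rw [this]
    exact hm.compl

lemma measurableSet_iterEq {n m : ℕ} (w : Fin m → Fin n → Fin n → ℝ) (u : Fin n → Protocol)
    (S₀ : Finset (Fin n)) :
    ∀ (t : ℕ) (B : Finset (Fin n)),
      MeasurableSet {μ : Fin n → Fin m → ℝ | (ltmStep w u μ)^[t] S₀ = B} := by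
  intro t
  induction t with
  | zero =>
      intro B
      by_cases h : S₀ = B <;> simp [h]
  | succ t ih =>
      intro B
      have hset : {μ : Fin n → Fin m → ℝ | (ltmStep w u μ)^[t+1] S₀ = B}
          = ⋃ A : Finset (Fin n),
              ({μ | (ltmStep w u μ)^[t] S₀ = A} ∩ {μ | ltmStep w u μ A = B}) := by
        ext μ
        simp only [Set.mem_iUnion, Set.mem_inter_iff, Set.mem_setOf_eq,
          Function.iterate_succ_apply']
        constructor
        · intro h; exact ⟨_, rfl, h⟩
        · rintro ⟨A, h1, h2⟩; rw [h1]; exact h2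
      rw [hset]
      exact MeasurableSet.iUnion fun A => (ih A).inter (measurableSet_stepEq w u A B)

lemma measurableSet_mem_ltmSS {n m : ℕ} (w : Fin m → Fin n → Fin n → ℝ) (u : Fin n → Protocol)
    (S₀ : Finset (Fin n)) (i : Fin n) :
    MeasurableSet {μ : Fin n → Fin m → ℝ | i ∈ ltmSS w u S₀ μ} := by
  have hset : {μ : Fin n → Fin m → ℝ | i ∈ ltmSS w u S₀ μ}
      = ⋃ (B : Finset (Fin n)) (_ : i ∈ B), {μ | (ltmStep w u μ)^[n] S₀ = B} := by
    ext μ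
    simp only [Set.mem_iUnion, Set.mem_setOf_eq, ltmSS]
    constructor
    · intro h; exact ⟨_, h, rfl⟩
    · rintro ⟨B, hB, h⟩; rw [h]; exact hB
  rw [hset]
  exact MeasurableSet.iUnion fun B => MeasurableSet.iUnion fun _ => measurableSet_iterEq w u S₀ n B

instance : IsProbabilityMeasure (volume.restrict (Set.Icc (0:ℝ) 1)) :=
  ⟨by simp [Real.volume_Icc]⟩

instance (n m : ℕ) : IsProbabilityMeasure (thMeasure n m) := by
  unfold thMeasure; infer_instance

lemma measurePreserving_component {α : Type*} [MeasurableSpace α] (ν : Measure α)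
    [IsProbabilityMeasure ν] :
    MeasurePreserving (fun (y : Fin 2 → α) (_ : Fin 1) => y 0)
      (Measure.pi fun _ : Fin 2 => ν) (Measure.pi fun _ : Fin 1 => ν) := by
  have hmeas : Measurable (fun (y : Fin 2 → α) (_ : Fin 1) => y 0) :=
    measurable_pi_iff.mpr fun _ => measurable_pi_apply 0
  refine ⟨hmeas, ?_⟩
  refine (Measure.pi_eq fun s hs => ?_).symm
  rw [Measure.map_apply hmeas (MeasurableSet.univ_pi hs)]
  have hpre : (fun (y : Fin 2 → α) (_ : Fin 1) => y 0) ⁻¹' (Set.univ.pi s)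
      = Set.univ.pi (fun k : Fin 2 => if k = 0 then s 0 else Set.univ) := by
    ext y
    simp [Set.mem_pi, Fin.forall_fin_two, Fin.forall_fin_one]
  rw [hpre, Measure.pi_pi]
  simp [Fin.prod_univ_two]

noncomputable def prjMap (n : ℕ) (μ : Fin n → Fin 2 → ℝ) : Fin n → Fin 1 → ℝ :=
  fun a _ => μ a 0

lemma measurePreserving_prjMap (n : ℕ) :
    MeasurePreserving (prjMap n) (thMeasure n 2) (thMeasure n 1) := by
  unfold thMeasure prjMap
  exact measurePreserving_pi _ _ (fun _ => measurePreserving_component _)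

lemma pLTM_one_eq {N : ℕ} (u : Fin N → Protocol) (S₀ : Finset (Fin N)) (i : Fin N) :
    pLTM (fun _ : Fin 1 => pathW N) u S₀ i
      = (thMeasure N 2 {μ | i ∈ ltmSS (fun _ : Fin 1 => pathW N) u S₀ (prjMap N μ)}).toReal := by
  unfold pLTM
  rw [← (measurePreserving_prjMap N).map_eq,
    Measure.map_apply (measurePreserving_prjMap N).measurable
      (measurableSet_mem_ltmSS _ u S₀ i)]
  rfl

end AuxMeasure
section AuxPath

open MeasureTheory

lemma pathW_nonneg (N : ℕ) (i j : Fin N) : 0 ≤ pathW N i j := by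
  unfold pathW
  split
  · split <;> norm_num
  · exact le_refl 0

lemma pathW_adj {N : ℕ} {x y : Fin N} (h : pathW N x y ≠ 0) :
    y.val = x.val + 1 ∨ x.val = y.val + 1 := by
  by_contra hc
  unfold pathW at h
  rw [if_neg hc] at h
  exact h rfl

lemma pathW_le_half {N : ℕ} {x : Fin N} (h0 : x.val ≠ 0) (h1 : x.val ≠ N - 1) (y : Fin N) :
    pathW N x y ≤ 1/2 := by
  unfold pathW
  split
  · rw [if_neg (by tauto)]
  · norm_num

lemma pathW_eq_half {N : ℕ} {x y : Fin N} (h0 : x.val ≠ 0) (h1 : x.val ≠ N - 1)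
    (hadj : y.val = x.val + 1 ∨ x.val = y.val + 1) : pathW N x y = 1/2 := by
  unfold pathW
  rw [if_pos hadj, if_neg (by tauto)]

lemma cut_generic {n : ℕ} (w : Fin 1 → Fin n → Fin n → ℝ) (u : Fin n → Protocol)
    (ν : Fin n → Fin 1 → ℝ) (S₀ : Finset (Fin n)) (P : Fin n → Prop)
    (hS₀ : ∀ x ∈ S₀, ¬ P x)
    (hb : ∀ x, P x → ∀ S : Finset (Fin n), (∀ y ∈ S, ¬ P y) → ¬ (ν x 0 < ∑ a ∈ S, w 0 x a)) :
    ∀ t, ∀ x ∈ (ltmStep w u ν)^[t] S₀, ¬ P x := by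
  intro t
  induction t with
  | zero => simpa using hS₀
  | succ t ih =>
      intro x hx
      rw [Function.iterate_succ_apply', mem_ltmStep_one_iff] at hx
      rcases hx with hx | hx
      · exact ih x hx
      · intro hPx
        exact hb x hPx _ ih hx

/-- Core blocking lemma: given the events on thresholds, `i₀` stays inactive. -/
lemma block_of_P {N : ℕ} (j i₀ : Fin N) (P : Fin N → Prop)
    (h0 : i₀.val ≠ 0) (h1 : i₀.val ≠ N - 1)
    (hPj : ¬ P j) (hPi : P i₀)
    (hnbr : ∀ x y : Fin N, P x → x ≠ i₀ → pathW N x y ≠ 0 → P y)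
    (hnbr₀ : ∀ y : Fin N, pathW N i₀ y ≠ 0 → ¬ P y → y = j)
    (u : Fin N → Protocol) (ν : Fin N → Fin 1 → ℝ)
    (hν : 1/2 ≤ ν i₀ 0) (hν' : ∀ b : Fin N, b ≠ i₀ → P b → 0 ≤ ν b 0) :
    i₀ ∉ ltmSS (fun _ : Fin 1 => pathW N) u {j} ν := by
  intro hmem
  have hb : ∀ x, P x → ∀ S : Finset (Fin N), (∀ y ∈ S, ¬ P y) →
      ¬ (ν x 0 < ∑ a ∈ S, pathW N x a) := by
    intro x hPx S hS
    by_cases hxi : x = i₀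
    · subst hxi
      have hsum : ∑ a ∈ S, pathW N x a ≤ 1/2 := by
        calc ∑ a ∈ S, pathW N x a ≤ ∑ a ∈ S, (if a = j then (1:ℝ)/2 else 0) := by
              apply Finset.sum_le_sum
              intro a ha
              by_cases hz : pathW N x a = 0
              · rw [hz]; split <;> norm_num
              · have haj : a = j := hnbr₀ a hz (hS a ha)
                rw [haj, if_pos rfl]
                exact pathW_le_half h0 h1 j
          _ = if j ∈ S then (1:ℝ)/2 else 0 := Finset.sum_ite_eq' S j (fun _ => (1:ℝ)/2)
          _ ≤ 1/2 := by split <;> norm_num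
      intro hlt
      linarith
    · have hsum : ∑ a ∈ S, pathW N x a = 0 := by
        apply Finset.sum_eq_zero
        intro a ha
        by_contra hz
        exact hS a ha (hnbr x a hPx hxi hz)
      rw [hsum]
      exact not_lt.mpr (hν' x hxi hPx)
  have := cut_generic (fun _ : Fin 1 => pathW N) u ν {j} P
    (by intro x hx; rw [Finset.mem_singleton] at hx; rw [hx]; exact hPj) hb N i₀ hmem
  exact this hPi

lemma key_block {N : ℕ} (hN : 4 ≤ N) (j : Fin N) :
    ∃ i₀ : Fin N, (i₀.val ≠ 0 ∧ i₀.val ≠ N - 1) ∧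
      (i₀.val = j.val + 1 ∨ j.val = i₀.val + 1) ∧
      ∀ (u : Fin N → Protocol) (ν : Fin N → Fin 1 → ℝ), 1/2 ≤ ν i₀ 0 →
        (∀ b : Fin N, b ≠ i₀ → 0 ≤ ν b 0) →
        i₀ ∉ ltmSS (fun _ : Fin 1 => pathW N) u {j} ν := by
  have hj : j.val < N := j.isLt
  by_cases hc : j.val + 1 ≤ N - 2
  · refine ⟨⟨j.val + 1, by omega⟩, ⟨by (show j.val + 1 ≠ 0; omega),
      by (show j.val + 1 ≠ N - 1; omega)⟩, Or.inl rfl, ?_⟩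
    intro u ν h1 h2
    refine block_of_P j _ (fun b => j.val + 1 ≤ b.val)
      (by (show j.val + 1 ≠ 0; omega)) (by (show j.val + 1 ≠ N - 1; omega))
      (by (show ¬ (j.val + 1 ≤ j.val); omega)) (by (show j.val + 1 ≤ j.val + 1; omega))
      ?_ ?_ u ν h1 (fun b hb _ => h2 b hb)
    · intro x y hPx hxne hz
      have hadj := pathW_adj hz
      have hxv : x.val ≠ j.val + 1 := fun hh => hxne (Fin.ext hh)
      show j.val + 1 ≤ y.val
      have hPx' : j.val + 1 ≤ x.val := hPx
      omega
    · intro y hz hPy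
      have hadj := pathW_adj hz
      have hPy' : ¬ (j.val + 1 ≤ y.val) := hPy
      have hadj' : y.val = j.val + 1 + 1 ∨ j.val + 1 = y.val + 1 := hadj
      exact Fin.ext (by show y.val = j.val; omega)
  · have hj2 : N - 2 ≤ j.val := by omega
    refine ⟨⟨j.val - 1, by omega⟩, ⟨by (show j.val - 1 ≠ 0; omega),
      by (show j.val - 1 ≠ N - 1; omega)⟩, Or.inr (by (show j.val = j.val - 1 + 1; omega)), ?_⟩
    intro u ν h1 h2
    refine block_of_P j _ (fun b => b.val ≤ j.val - 1)
      (by (show j.val - 1 ≠ 0; omega)) (by (show j.val - 1 ≠ N - 1; omega))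
      (by (show ¬ (j.val ≤ j.val - 1); omega)) (by (show j.val - 1 ≤ j.val - 1; omega))
      ?_ ?_ u ν h1 (fun b hb _ => h2 b hb)
    · intro x y hPx hxne hz
      have hadj := pathW_adj hz
      have hxv : x.val ≠ j.val - 1 := fun hh => hxne (Fin.ext hh)
      have hPx' : x.val ≤ j.val - 1 := hPx
      show y.val ≤ j.val - 1
      omega
    · intro y hz hPy
      have hadj := pathW_adj hz
      have hPy' : ¬ (y.val ≤ j.val - 1) := hPy
      have hadj' : y.val = (j.val - 1) + 1 ∨ j.val - 1 = y.val + 1 := hadj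
      exact Fin.ext (by show y.val = j.val; omega)

lemma act_path {N : ℕ} (hN : 1 ≤ N) {j i₀ : Fin N}
    (hadj : i₀.val = j.val + 1 ∨ j.val = i₀.val + 1)
    (h0 : i₀.val ≠ 0) (h1 : i₀.val ≠ N - 1) (u : Fin N → Protocol)
    (ν : Fin N → Fin 1 → ℝ) (hν : ν i₀ 0 < 1/2) :
    i₀ ∈ ltmSS (fun _ : Fin 1 => pathW N) u {j} ν := by
  have h2 : i₀ ∈ (ltmStep (fun _ : Fin 1 => pathW N) u ν)^[1] {j} := by
    rw [Function.iterate_one, mem_ltmStep_one_iff]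
    refine Or.inr ?_
    rw [Finset.sum_singleton]
    have hval : pathW N i₀ j = 1/2 := pathW_eq_half h0 h1 (by tauto)
    change ν i₀ 0 < pathW N i₀ j
    rw [hval]
    exact hν
  exact iter_subset_iter _ _ _ _ hN h2

end AuxPath
section AuxFinal

open MeasureTheory

lemma sum_toReal_lt {Ω : Type*} [MeasurableSpace Ω] (ms : Measure Ω) [IsProbabilityMeasure ms]
    {κ : ℕ} (A B : Fin κ → Set Ω) (hsub : ∀ i, A i ⊆ B i) (i₀ : Fin κ)
    (hA : MeasurableSet (A i₀)) (E : Set Ω) (hEB : E ⊆ B i₀)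
    (hdisj : Disjoint (A i₀) E) (hpos : ms E ≠ 0) :
    ∑ i, (ms (A i)).toReal < ∑ i, (ms (B i)).toReal := by
  apply Finset.sum_lt_sum
  · intro i _
    exact ENNReal.toReal_mono (measure_ne_top ms _) (measure_mono (hsub i))
  · refine ⟨i₀, Finset.mem_univ _, ?_⟩
    have h1 : ms (A i₀) + ms E ≤ ms (B i₀) := by
      rw [← measure_union' hdisj hA]
      exact measure_mono (Set.union_subset (hsub i₀) hEB)
    have h2 : ms (A i₀) < ms (B i₀) :=
      lt_of_lt_of_le (ENNReal.lt_add_right (measure_ne_top ms _) hpos) h1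
    exact ENNReal.toReal_strict_mono (measure_ne_top ms _) h2

def wbox (N : ℕ) (i₀ : Fin N) (s0 s1 : Set ℝ) : Set (Fin N → Fin 2 → ℝ) :=
  Set.univ.pi fun a => Set.univ.pi fun k =>
    if a = i₀ then (if k = 0 then s0 else s1)
    else (if k = 0 then Set.Ioo (0:ℝ) 1 else Set.univ)

lemma mem_wbox {N : ℕ} {i₀ : Fin N} {s0 s1 : Set ℝ} {μ : Fin N → Fin 2 → ℝ}
    (h : μ ∈ wbox N i₀ s0 s1) :
    μ i₀ 0 ∈ s0 ∧ μ i₀ 1 ∈ s1 ∧ ∀ b : Fin N, b ≠ i₀ → μ b 0 ∈ Set.Ioo (0:ℝ) 1 := by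
  simp only [wbox, Set.mem_pi, Set.mem_univ, true_implies] at h
  refine ⟨by simpa using h i₀ 0, by simpa using h i₀ 1, fun b hb => by simpa [hb] using h b 0⟩

lemma wbox_subset_memSS_min {N : ℕ} (hN : 4 ≤ N) {j i₀ : Fin N}
    (hadj : i₀.val = j.val + 1 ∨ j.val = i₀.val + 1)
    (h0 : i₀.val ≠ 0) (h1 : i₀.val ≠ N - 1) (u : Fin N → Protocol)
    {μ : Fin N → Fin 2 → ℝ} (h : μ ∈ wbox N i₀ (Set.Ioo (1/2 : ℝ) 1) (Set.Ioo (0:ℝ) (1/2))) :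
    i₀ ∈ ltmSS (fun _ : Fin 1 => pathW N) u {j} (fun a _ => min (μ a 0) (μ a 1)) := by
  obtain ⟨hi0, hi1, _⟩ := mem_wbox h
  exact act_path (by omega) hadj h0 h1 u _
    (lt_of_le_of_lt (min_le_right _ _) hi1.2)

lemma volume_restrict_Ioo_ne_zero {a b : ℝ} (ha : 0 ≤ a) (hb : b ≤ 1) (hab : a < b) :
    volume.restrict (Set.Icc (0:ℝ) 1) (Set.Ioo a b) ≠ 0 := by
  rw [Measure.restrict_apply measurableSet_Ioo,
    Set.inter_eq_left.2 (Set.Ioo_subset_Icc_self.trans (Set.Icc_subset_Icc ha hb)),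
    Real.volume_Ioo]
  exact (ENNReal.ofReal_pos.mpr (by linarith)).ne'

lemma wbox_measurable {N : ℕ} (i₀ : Fin N) {s0 s1 : Set ℝ}
    (hs0 : MeasurableSet s0) (hs1 : MeasurableSet s1) :
    MeasurableSet (wbox N i₀ s0 s1) := by
  refine MeasurableSet.univ_pi fun a => MeasurableSet.univ_pi fun k => ?_
  split
  · split
    · exact hs0
    · exact hs1
  · split
    · exact measurableSet_Ioo
    · exact MeasurableSet.univ

lemma wbox_pos {N : ℕ} (i₀ : Fin N) {s0 s1 : Set ℝ}
    (h0 : volume.restrict (Set.Icc (0:ℝ) 1) s0 ≠ 0)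
    (h1 : volume.restrict (Set.Icc (0:ℝ) 1) s1 ≠ 0) :
    thMeasure N 2 (wbox N i₀ s0 s1) ≠ 0 := by
  unfold thMeasure wbox
  rw [Measure.pi_pi]
  rw [Finset.prod_ne_zero_iff]
  intro a _
  rw [Measure.pi_pi, Finset.prod_ne_zero_iff]
  intro k _
  have hIoo : volume.restrict (Set.Icc (0:ℝ) 1) (Set.Ioo (0:ℝ) 1) ≠ 0 :=
    volume_restrict_Ioo_ne_zero le_rfl le_rfl one_pos
  have huniv : volume.restrict (Set.Icc (0:ℝ) 1) Set.univ ≠ 0 := by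
    have : volume.restrict (Set.Icc (0:ℝ) 1) Set.univ = 1 := measure_univ
    rw [this]; exact one_ne_zero
  split
  · split
    · exact h0
    · exact h1
  · split
    · exact hIoo
    · exact huniv

lemma measurable_mxMap (N : ℕ) :
    Measurable (fun (μ : Fin N → Fin 2 → ℝ) => (fun a (_ : Fin 1) => max (μ a 0) (μ a 1))) := by
  refine measurable_pi_iff.mpr fun a => measurable_pi_iff.mpr fun _ => Measurable.max ?_ ?_
  · exact (measurable_pi_apply 0).comp (measurable_pi_apply a)
  · exact (measurable_pi_apply 1).comp (measurable_pi_apply a)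

end AuxFinal
/-- protocol ordering of cascade centralities on the path networks:
for `N ≥ 4` and every seed `j`,
`C_j^{𝒢_R, OR} > C_j^{G_Pa} > C_j^{𝒢_R, AND}` (the monoplex centrality is the
same for every protocol assignment `u`, since OR and AND coincide there). -/
theorem path_cascade_centrality_ordering (N : ℕ) (hN : 4 ≤ N) (j : Fin N)
    (u : Fin N → Protocol) :
    casCen (fun _ : Fin 2 => pathW N) (fun _ => Protocol.OR) j >
      casCen (fun _ : Fin 1 => pathW N) u j ∧
    casCen (fun _ : Fin 1 => pathW N) u j >
      casCen (fun _ : Fin 2 => pathW N) (fun _ => Protocol.AND) j := by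
  obtain ⟨i₀, ⟨h0, h1⟩, hadj, hblock⟩ := key_block hN j
  have hw : ∀ a b : Fin N, 0 ≤ (fun _ : Fin 1 => pathW N) 0 a b :=
    fun a b => pathW_nonneg N a b
  have hMono : casCen (fun _ : Fin 1 => pathW N) u j
      = ∑ i : Fin N, (thMeasure N 2
          {μ | i ∈ ltmSS (fun _ : Fin 1 => pathW N) u {j} (prjMap N μ)}).toReal := by
    unfold casCen
    exact Finset.sum_congr rfl fun i _ => pLTM_one_eq u {j} i
  constructor
  · have hOR : casCen (fun _ : Fin 2 => pathW N) (fun _ => Protocol.OR) j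
        = ∑ i : Fin N, (thMeasure N 2 {μ | i ∈ ltmSS (fun _ : Fin 1 => pathW N) u {j}
            (fun a _ => min (μ a 0) (μ a 1))}).toReal := by
      unfold casCen pLTM
      refine Finset.sum_congr rfl fun i _ => ?_
      have hset : {μ : Fin N → Fin 2 → ℝ |
            i ∈ ltmSS (fun _ : Fin 2 => pathW N) (fun _ => Protocol.OR) {j} μ}
          = {μ : Fin N → Fin 2 → ℝ | i ∈ ltmSS (fun _ : Fin 1 => pathW N) u {j}
              (fun a _ => min (μ a 0) (μ a 1))} := by
        ext μ
        rw [Set.mem_setOf_eq, Set.mem_setOf_eq, ltmSS_two_OR (pathW N) u {j} μ]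
      rw [hset]
    rw [hOR, hMono]
    refine sum_toReal_lt (thMeasure N 2)
      (fun i => {μ | i ∈ ltmSS (fun _ : Fin 1 => pathW N) u {j} (prjMap N μ)})
      (fun i => {μ | i ∈ ltmSS (fun _ : Fin 1 => pathW N) u {j}
        (fun a _ => min (μ a 0) (μ a 1))})
      ?_ i₀ ?_ (wbox N i₀ (Set.Ioo (1/2 : ℝ) 1) (Set.Ioo (0:ℝ) (1/2))) ?_ ?_ ?_
    · intro i μ hμ
      exact ltmSS_anti hw u {j} (fun a => min_le_left _ _) hμ
    · exact (measurableSet_mem_ltmSS (fun _ : Fin 1 => pathW N) u {j} i₀).preimage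
        (measurePreserving_prjMap N).measurable
    · intro μ hμ
      exact wbox_subset_memSS_min hN hadj h0 h1 u hμ
    · rw [Set.disjoint_left]
      intro μ hμA hμE
      obtain ⟨hi0, hi1, hb⟩ := mem_wbox hμE
      exact hblock u (prjMap N μ) hi0.1.le (fun b hb' => (hb b hb').1.le) hμA
    · exact wbox_pos i₀
        (volume_restrict_Ioo_ne_zero (by norm_num) le_rfl (by norm_num))
        (volume_restrict_Ioo_ne_zero le_rfl (by norm_num) (by norm_num))
  · have hAND : casCen (fun _ : Fin 2 => pathW N) (fun _ => Protocol.AND) j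
        = ∑ i : Fin N, (thMeasure N 2 {μ | i ∈ ltmSS (fun _ : Fin 1 => pathW N) u {j}
            (fun a _ => max (μ a 0) (μ a 1))}).toReal := by
      unfold casCen pLTM
      refine Finset.sum_congr rfl fun i _ => ?_
      have hset : {μ : Fin N → Fin 2 → ℝ |
            i ∈ ltmSS (fun _ : Fin 2 => pathW N) (fun _ => Protocol.AND) {j} μ}
          = {μ : Fin N → Fin 2 → ℝ | i ∈ ltmSS (fun _ : Fin 1 => pathW N) u {j}
              (fun a _ => max (μ a 0) (μ a 1))} := by
        ext μ
        rw [Set.mem_setOf_eq, Set.mem_setOf_eq, ltmSS_two_AND (pathW N) u {j} μ]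
      rw [hset]
    rw [hAND, hMono]
    refine sum_toReal_lt (thMeasure N 2)
      (fun i => {μ | i ∈ ltmSS (fun _ : Fin 1 => pathW N) u {j}
        (fun a _ => max (μ a 0) (μ a 1))})
      (fun i => {μ | i ∈ ltmSS (fun _ : Fin 1 => pathW N) u {j} (prjMap N μ)})
      ?_ i₀ ?_ (wbox N i₀ (Set.Ioo (0:ℝ) (1/2)) (Set.Ioo (1/2 : ℝ) 1)) ?_ ?_ ?_
    · intro i μ hμ
      exact ltmSS_anti hw u {j} (fun a => le_max_left _ _) hμ
    · exact (measurableSet_mem_ltmSS (fun _ : Fin 1 => pathW N) u {j} i₀).preimage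
        (measurable_mxMap N)
    · intro μ hμ
      obtain ⟨hi0, hi1, hb⟩ := mem_wbox hμ
      exact act_path (by omega) hadj h0 h1 u (prjMap N μ) hi0.2
    · rw [Set.disjoint_left]
      intro μ hμA hμE
      obtain ⟨hi0, hi1, hb⟩ := mem_wbox hμE
      exact hblock u (fun a _ => max (μ a 0) (μ a 1))
        (le_trans hi1.1.le (le_max_right _ _))
        (fun b hb' => le_trans (hb b hb').1.le (le_max_left _ _)) hμA
    · exact wbox_pos i₀
        (volume_restrict_Ioo_ne_zero le_rfl (by norm_num) (by norm_num))
        (volume_restrict_Ioo_ne_zero (by norm_num) le_rfl (by norm_num))
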